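/- Let φ be a continuous flow on M and A ⊆ M forward invariant with the property that every point of the topological boundary ∂A enters the interior of A immediately: for every p ∈ ∂A and every δ > 0 there exists 0 < s < δ with φ(s,p) ∈ int A. Then the entrance time function 𝒯_A is upper semicontinuous on its domain. -/
import Mathlib


open Set Topology ENNReal

/-- The entrance time of the point `p` into the set `A` under the flow `φ`, valued in
`[0, ∞]`: points that never enter `A` are assigned the value `+∞`. -/
noncomputable def entranceTime {M : Type*} (φ : ℝ → M → M) (A : Set M) (p : M) : ℝ≥0∞ :=
  sInf ((fun s : ℝ => ENNReal.ofReal s) '' {s : ℝ | 0 ≤ s ∧ φ s p ∈ A})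

/-- Let `φ` be a continuous flow on `M` and `A ⊆ M` closed and forward
invariant such that every point of the topological boundary `∂A` enters the interior of `A`
immediately: for every `p ∈ ∂A` and `δ > 0` there is `0 < s < δ` with `φ(s,p) ∈ int A`.
Then the entrance time function `𝒯_A` is upper semicontinuous on its domain
`{𝒯_A < ∞}`: whenever `𝒯_A(p) < a` there is a neighborhood `U` of `p` on which `𝒯_A < a`. -/
theorem stmt16 {M : Type*} [TopologicalSpace M] (φ : ℝ → M → M)
    (hcont : Continuous fun q : ℝ × M => φ q.1 q.2)
    (hφ0 : ∀ p, φ 0 p = p)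
    (hφadd : ∀ s t p, φ (s + t) p = φ s (φ t p))
    (A : Set M) (hA : IsClosed A)
    (hinv : ∀ s ≥ (0 : ℝ), ∀ p ∈ A, φ s p ∈ A)
    (hentry : ∀ p ∈ frontier A, ∀ δ > (0 : ℝ), ∃ s, 0 < s ∧ s < δ ∧ φ s p ∈ interior A)
    (p : M) (hdom : entranceTime φ A p ≠ ⊤)
    (a : ℝ≥0∞) (ha : entranceTime φ A p < a) :
    ∃ U ∈ 𝓝 p, ∀ q ∈ U, entranceTime φ A q < a := by
  obtain ⟨b, hb, hba⟩ := sInf_lt_iff.mp ha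
  obtain ⟨s, ⟨hs0, hsA⟩, rfl⟩ := hb
  have key : ∃ t, 0 ≤ t ∧ ENNReal.ofReal t < a ∧ φ t p ∈ interior A := by
    by_cases hint : φ s p ∈ interior A
    · exact ⟨s, hs0, hba, hint⟩
    · have hfr : φ s p ∈ frontier A := by
        rw [hA.frontier_eq]; exact ⟨hsA, hint⟩
      rcases eq_or_ne a ⊤ with haT | haT
      · obtain ⟨r, hr0, _, hrI⟩ := hentry _ hfr 1 one_pos
        exact ⟨r + s, by linarith, by simp [haT], by rw [hφadd]; exact hrI⟩
      · have hslt : s < a.toReal := by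
          rwa [ENNReal.ofReal_lt_iff_lt_toReal hs0 haT] at hba
        obtain ⟨r, hr0, hrδ, hrI⟩ := hentry _ hfr (a.toReal - s) (by linarith)
        refine ⟨r + s, by linarith, ?_, by rw [hφadd]; exact hrI⟩
        calc ENNReal.ofReal (r + s) < ENNReal.ofReal a.toReal :=
              (ENNReal.ofReal_lt_ofReal_iff_of_nonneg (by linarith)).mpr (by linarith)
          _ = a := ENNReal.ofReal_toReal haT
  obtain ⟨t, ht0, hta, htI⟩ := key
  have hcφt : Continuous fun q => φ t q :=
    hcont.comp (continuous_const.prodMk continuous_id)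
  refine ⟨(fun q => φ t q) ⁻¹' interior A,
    (isOpen_interior.preimage hcφt).mem_nhds htI, ?_⟩
  intro q hq
  calc entranceTime φ A q ≤ ENNReal.ofReal t :=
        sInf_le ⟨t, ⟨ht0, interior_subset hq⟩, rfl⟩
    _ < a := hta
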